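/- arXiv:1304.7442 — 2 statements merged into one kernel-verified Lean document; each statement's English description precedes it below -/
import Mathlib

section
/- Let A₁, …, A_m : Matrix (Fin k) (Fin n) ℂ satisfy ∑ᵢ Aᵢᴴ·Aᵢ = 1ₙ, and define Φ : Matrix (Fin n) (Fin n) ℂ → Matrix (Fin k) (Fin k) ℂ by Φ(X) = ∑ᵢ Aᵢ·X·Aᵢᴴ. Then S(Φ(ρ)) = S(ρ) for every density matrix ρ : Matrix (Fin n) (Fin n) ℂ if and only if there exists an isometry V : Matrix (Fin k) (Fin n) ℂ (i.e. Vᴴ·V = 1ₙ) such that Φ(X) = V·X·Vᴴ for all X : Matrix (Fin n) (Fin n) ℂ. -/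
open Matrix ComplexOrder

/-- The von Neumann entropy of a (Hermitian) matrix: `S(M) = ∑ᵢ φ(λᵢ(M))`,
where `φ(x) = -x·log x` and the `λᵢ(M)` are the eigenvalues of `M` (with
multiplicity). Junk value `0` for non-Hermitian matrices. -/
noncomputable def vnEntropy {d : ℕ} (M : Matrix (Fin d) (Fin d) ℂ) : ℝ :=
  haveI := Classical.dec M.IsHermitian
  if h : M.IsHermitian then ∑ i, Real.negMulLog (h.eigenvalues i) else 0


section AUX
open Polynomial

lemma aux_vnEntropy_eq {d : ℕ} {M : Matrix (Fin d) (Fin d) ℂ} (h : M.IsHermitian) :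
    vnEntropy M = ∑ i, Real.negMulLog (h.eigenvalues i) := by
  unfold vnEntropy
  rw [dif_pos h]

lemma aux_sum_castLE {n k : ℕ} {M : Type*} [AddCommMonoid M] (hnk : n ≤ k) (f : Fin k → M)
    (hf : ∀ c : Fin k, (∀ j : Fin n, c ≠ Fin.castLE hnk j) → f c = 0) :
    ∑ c, f c = ∑ j, f (Fin.castLE hnk j) := by
  classical
  calc ∑ c, f c = ∑ c ∈ Finset.univ.map ⟨Fin.castLE hnk, Fin.castLE_injective hnk⟩, f c := by
        symm
        apply Finset.sum_subset (Finset.subset_univ _)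
        intro c _ hc
        apply hf
        intro j hj
        exact hc (Finset.mem_map.mpr ⟨j, Finset.mem_univ _, hj.symm⟩)
    _ = ∑ j, f (Fin.castLE hnk j) := by rw [Finset.sum_map]; rfl

lemma aux_charpoly_conj {d : ℕ} (W N : Matrix (Fin d) (Fin d) ℂ)
    (hW : W * Wᴴ = 1) : (W * N * Wᴴ).charpoly = N.charpoly := by
  have key : charmatrix (W * N * Wᴴ)
      = (C : ℂ →+* ℂ[X]).mapMatrix W * charmatrix N * (C : ℂ →+* ℂ[X]).mapMatrix Wᴴ := by
    unfold charmatrix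
    rw [mul_sub, sub_mul]
    congr 1
    · have h1 : (C : ℂ →+* ℂ[X]).mapMatrix W * Matrix.scalar (Fin d) (X : ℂ[X])
          = Matrix.scalar (Fin d) (X : ℂ[X]) * (C : ℂ →+* ℂ[X]).mapMatrix W :=
        (Matrix.scalar_commute (X : ℂ[X]) (fun r => Commute.all _ r) _).symm
      rw [h1, mul_assoc, ← _root_.map_mul, hW, _root_.map_one, mul_one]
    · rw [← _root_.map_mul, ← _root_.map_mul]
  unfold Matrix.charpoly
  rw [key, det_mul, det_mul]
  have h2 : ((C : ℂ →+* ℂ[X]).mapMatrix W).det * ((C : ℂ →+* ℂ[X]).mapMatrix Wᴴ).det = 1 := by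
    rw [← det_mul, ← _root_.map_mul, hW, _root_.map_one, det_one]
  rw [mul_comm ((C : ℂ →+* ℂ[X]).mapMatrix W).det, mul_assoc, h2, mul_one]

lemma aux_charpoly_diagonal {d : ℕ} (μ : Fin d → ℂ) :
    (Matrix.diagonal μ).charpoly = ∏ i, (X - C (μ i)) := by
  have key : charmatrix (Matrix.diagonal μ) = Matrix.diagonal (fun i => X - C (μ i)) := by
    ext i j
    by_cases h : i = j
    · subst h; simp
    · simp [h, Matrix.diagonal_apply_ne _ h]
  rw [Matrix.charpoly, key, det_diagonal]

lemma aux_eigenvalues_multiset {d : ℕ} {M : Matrix (Fin d) (Fin d) ℂ} (hM : M.IsHermitian)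
    {μ : Fin d → ℝ} {W : Matrix (Fin d) (Fin d) ℂ} (hW : W * Wᴴ = 1)
    (hWM : M = W * Matrix.diagonal (fun i => (μ i : ℂ)) * Wᴴ) :
    Multiset.map hM.eigenvalues Finset.univ.val = Multiset.map μ Finset.univ.val := by
  have hU : (hM.eigenvectorUnitary : Matrix (Fin d) (Fin d) ℂ)
      * (hM.eigenvectorUnitary : Matrix (Fin d) (Fin d) ℂ)ᴴ = 1 := by
    rw [← Matrix.star_eq_conjTranspose]
    exact Matrix.mem_unitaryGroup_iff.mp hM.eigenvectorUnitary.2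
  have h1 : M.charpoly = ∏ i, (X - C ((hM.eigenvalues i : ℂ))) := by
    calc M.charpoly = ((hM.eigenvectorUnitary : Matrix (Fin d) (Fin d) ℂ)
          * Matrix.diagonal (fun i => ((hM.eigenvalues i : ℝ) : ℂ))
          * (hM.eigenvectorUnitary : Matrix (Fin d) (Fin d) ℂ)ᴴ).charpoly := by
          congr 1
          conv_lhs => rw [hM.spectral_theorem]
          rw [Unitary.conjStarAlgAut_apply]
          rw [Matrix.star_eq_conjTranspose]
          rfl
      _ = _ := by rw [aux_charpoly_conj _ _ hU, aux_charpoly_diagonal]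
  have h2 : M.charpoly = ∏ i, (X - C ((μ i : ℂ))) := by
    rw [hWM, aux_charpoly_conj _ _ hW, aux_charpoly_diagonal]
  have h3 : Multiset.map (fun i => ((hM.eigenvalues i : ℝ) : ℂ)) Finset.univ.val
      = Multiset.map (fun i => ((μ i : ℝ) : ℂ)) Finset.univ.val := by
    have r1 := Polynomial.roots_multiset_prod_X_sub_C
      (Multiset.map (fun i => ((hM.eigenvalues i : ℝ) : ℂ)) Finset.univ.val)
    have r2 := Polynomial.roots_multiset_prod_X_sub_C
      (Multiset.map (fun i => ((μ i : ℝ) : ℂ)) Finset.univ.val)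
    rw [Multiset.map_map] at r1 r2
    have e1 : (Multiset.map ((fun a => X - C a) ∘ fun i => ((hM.eigenvalues i : ℝ) : ℂ))
        Finset.univ.val).prod = M.charpoly := by
      rw [h1, Finset.prod]; rfl
    have e2 : (Multiset.map ((fun a => X - C a) ∘ fun i => ((μ i : ℝ) : ℂ))
        Finset.univ.val).prod = M.charpoly := by
      rw [h2, Finset.prod]; rfl
    rw [e1] at r1; rw [e2] at r2; rw [← r1, ← r2]
  have := congrArg (Multiset.map Complex.re) h3
  rwa [Multiset.map_map, Multiset.map_map] at this
  
lemma aux_entropy_eq {d : ℕ} {M : Matrix (Fin d) (Fin d) ℂ} (hM : M.IsHermitian)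
    {μ : Fin d → ℝ} {W : Matrix (Fin d) (Fin d) ℂ} (hW : W * Wᴴ = 1)
    (hWM : M = W * Matrix.diagonal (fun i => (μ i : ℂ)) * Wᴴ) :
    ∑ i, Real.negMulLog (hM.eigenvalues i) = ∑ i, Real.negMulLog (μ i) := by
  have h := congrArg (fun s => (Multiset.map Real.negMulLog s).sum)
    (aux_eigenvalues_multiset hM hW hWM)
  simpa [Multiset.map_map, Finset.sum, Function.comp_def] using h

lemma aux_conj_diag_apply {k n : ℕ} (U : Matrix (Fin k) (Fin n) ℂ) (e : Fin n → ℂ)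
    (a b : Fin k) :
    (U * Matrix.diagonal e * Uᴴ) a b = ∑ c, U a c * e c * star (U b c) := by
  simp [Matrix.mul_apply, Matrix.diagonal_apply, Finset.sum_mul, ite_mul, zero_mul,
    Matrix.conjTranspose_apply]

lemma aux_extend_unitary {n k : ℕ} (hnk : n ≤ k) (V : Matrix (Fin k) (Fin n) ℂ)
    (hV : Vᴴ * V = 1) :
    ∃ W : Matrix (Fin k) (Fin k) ℂ, W * Wᴴ = 1 ∧
      ∀ (a : Fin k) (j : Fin n), W a (Fin.castLE hnk j) = V a j := by
  classical
  set v : Fin k → EuclideanSpace ℂ (Fin k) := fun j =>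
    if h : (j : ℕ) < n then WithLp.toLp 2 (fun a => V a ⟨j, h⟩) else 0 with hv
  set s : Set (Fin k) := {j | (j : ℕ) < n} with hs
  have hVcol : ∀ p q : Fin n, ∑ a, star (V a p) * V a q = if p = q then 1 else 0 := by
    intro p q
    have := congrFun (congrFun hV p) q
    simpa [Matrix.mul_apply, Matrix.conjTranspose_apply, Matrix.one_apply] using this
  have hortho : Orthonormal ℂ (s.restrict v) := by
    rw [orthonormal_iff_ite]
    rintro ⟨i, hi⟩ ⟨j, hj⟩
    have hi' : (i : ℕ) < n := hi
    have hj' : (j : ℕ) < n := hj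
    simp only [Set.restrict_apply, hv, dif_pos hi', dif_pos hj', PiLp.inner_apply,
      RCLike.inner_apply, PiLp.toLp_apply]
    have := hVcol ⟨i, hi'⟩ ⟨j, hj'⟩
    simp only [starRingEnd_apply]
    refine (Finset.sum_congr rfl (fun x _ => ?_)).trans (this.trans ?_)
    · show (if h : (j : ℕ) < n then WithLp.toLp 2 (fun a => V a ⟨j, h⟩) else 0).ofLp x
          * star ((if h : (i : ℕ) < n then WithLp.toLp 2 (fun a => V a ⟨i, h⟩) else 0).ofLp x) = _
      rw [dif_pos hj', dif_pos hi']
      exact mul_comm _ _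
    congr 1
    simp [Fin.ext_iff, Subtype.ext_iff]
  obtain ⟨b, hb⟩ := hortho.exists_orthonormalBasis_extension_of_card_eq
    (by simp) 
  refine ⟨Matrix.of (fun a j => b j a), ?_, ?_⟩
  · rw [mul_eq_one_comm]
    ext p q
    have h3 := orthonormal_iff_ite.mp b.orthonormal p q
    simp only [PiLp.inner_apply, RCLike.inner_apply, starRingEnd_apply] at h3
    simp only [Matrix.mul_apply, Matrix.conjTranspose_apply, Matrix.one_apply, Matrix.of_apply]
    rw [← h3]
    exact Finset.sum_congr rfl fun _ _ => mul_comm _ _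
  · intro a j
    have hmem : (Fin.castLE hnk j) ∈ s := j.isLt
    have h1 : b (Fin.castLE hnk j) = v (Fin.castLE hnk j) := hb _ hmem
    have h2 : v (Fin.castLE hnk j) = (WithLp.toLp 2 (fun a => V a j) : EuclideanSpace ℂ (Fin k)) := by
      show (if h : ((Fin.castLE hnk j : Fin k) : ℕ) < n
          then (WithLp.toLp 2 (fun a => V a ⟨(Fin.castLE hnk j : Fin k), h⟩) : EuclideanSpace ℂ (Fin k))
          else 0) = (WithLp.toLp 2 (fun a => V a j) : EuclideanSpace ℂ (Fin k))
      exact dif_pos j.isLt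
    show b (Fin.castLE hnk j) a = V a j
    rw [h1, h2]

lemma aux_entropy_conj {n k : ℕ} (V : Matrix (Fin k) (Fin n) ℂ) (hV : Vᴴ * V = 1)
    {σ : Matrix (Fin n) (Fin n) ℂ} (hσ : σ.IsHermitian) :
    vnEntropy (V * σ * Vᴴ) = vnEntropy σ := by
  classical
  have hnk : n ≤ k := by
    have h1 : (1 : Matrix (Fin n) (Fin n) ℂ).rank = n := by simp [Matrix.rank_one]
    have h2 : (Vᴴ * V).rank = V.rank := Matrix.rank_conjTranspose_mul_self V
    have h3 : V.rank ≤ k := Matrix.rank_le_height V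
    rw [hV, h1] at h2
    omega
  set U : Matrix (Fin n) (Fin n) ℂ := (hσ.eigenvectorUnitary : Matrix (Fin n) (Fin n) ℂ) with hU
  have hUU : U * Uᴴ = 1 := by
    rw [← Matrix.star_eq_conjTranspose]
    exact Matrix.mem_unitaryGroup_iff.mp hσ.eigenvectorUnitary.2
  have hUU' : Uᴴ * U = 1 := mul_eq_one_comm.mp hUU
  have hσU : σ = U * Matrix.diagonal (fun i => ((hσ.eigenvalues i : ℝ) : ℂ)) * Uᴴ := by
    conv_lhs => rw [hσ.spectral_theorem]
    rw [Unitary.conjStarAlgAut_apply]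
    rw [Matrix.star_eq_conjTranspose]
    rfl
  have hV' : (V * U)ᴴ * (V * U) = 1 := by
    rw [Matrix.conjTranspose_mul, Matrix.mul_assoc, ← Matrix.mul_assoc Vᴴ, hV, Matrix.one_mul, hUU']
  obtain ⟨W, hWW, hWext⟩ := aux_extend_unitary hnk (V * U) hV'
  set μ : Fin k → ℝ := fun c =>
    if h : (c : ℕ) < n then hσ.eigenvalues ⟨c, h⟩ else 0 with hμ
  have hμcast : ∀ j : Fin n, μ (Fin.castLE hnk j) = hσ.eigenvalues j := by
    intro j
    show (if h : ((Fin.castLE hnk j : Fin k) : ℕ) < n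
      then hσ.eigenvalues ⟨(Fin.castLE hnk j : Fin k), h⟩ else 0) = hσ.eigenvalues j
    exact dif_pos j.isLt
  have hM : V * σ * Vᴴ = W * Matrix.diagonal (fun c => (μ c : ℂ)) * Wᴴ := by
    have step : V * σ * Vᴴ
        = (V * U) * Matrix.diagonal (fun i => ((hσ.eigenvalues i : ℝ) : ℂ)) * (V * U)ᴴ := by
      rw [Matrix.conjTranspose_mul]
      conv_lhs => rw [hσU]
      simp only [Matrix.mul_assoc]
    rw [step]
    ext a b
    rw [aux_conj_diag_apply, aux_conj_diag_apply]
    rw [aux_sum_castLE hnk (fun c => W a c * ((μ c : ℝ) : ℂ) * star (W b c))]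
    · apply Finset.sum_congr rfl
      intro j _
      rw [hWext, hWext, hμcast]
    · intro c hc
      have hcn : ¬ ((c : ℕ) < n) := by
        intro hlt
        exact hc ⟨c, hlt⟩ (by
          apply Fin.ext
          rfl)
      have : μ c = 0 := dif_neg hcn
      rw [this]
      simp
  have hHerm : (V * σ * Vᴴ).IsHermitian := by
    unfold Matrix.IsHermitian
    rw [Matrix.conjTranspose_mul, Matrix.conjTranspose_mul, Matrix.conjTranspose_conjTranspose,
      hσ.eq, Matrix.mul_assoc]
  rw [aux_vnEntropy_eq hHerm, aux_vnEntropy_eq hσ, aux_entropy_eq hHerm hWW hM]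
  rw [aux_sum_castLE hnk (fun c => Real.negMulLog (μ c))]
  · apply Finset.sum_congr rfl
    intro j _
    rw [hμcast]
  · intro c hc
    have hcn : ¬ ((c : ℕ) < n) := by
      intro hlt
      exact hc ⟨c, hlt⟩ (by apply Fin.ext; rfl)
    have : μ c = 0 := dif_neg hcn
    rw [this, Real.negMulLog_zero]
section D
open Matrix ComplexOrder

lemma aux_vecMulVec_psd {d : ℕ} (v : Fin d → ℂ) :
    (Matrix.vecMulVec v (star v)).PosSemidef := by
  have : Matrix.vecMulVec v (star v) = (Matrix.replicateRow Unit (star v))ᴴ * Matrix.replicateRow Unit (star v) := by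
    ext a b
    simp [Matrix.vecMulVec_apply, Matrix.mul_apply, Matrix.replicateRow_apply, Matrix.conjTranspose_apply]
  rw [this]
  exact Matrix.posSemidef_conjTranspose_mul_self _

lemma aux_vecMulVec_trace {d : ℕ} (v w : Fin d → ℂ) :
    (Matrix.vecMulVec v w).trace = w ⬝ᵥ v := by
  simp [Matrix.trace, Matrix.diag, Matrix.vecMulVec_apply, dotProduct, mul_comm]

lemma aux_kraus_term {k n : ℕ} (A : Matrix (Fin k) (Fin n) ℂ) (v : Fin n → ℂ) :
    A * Matrix.vecMulVec v (star v) * Aᴴ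
      = Matrix.vecMulVec (A *ᵥ v) (star (A *ᵥ v)) := by
  ext a b
  simp only [Matrix.mul_apply, Matrix.vecMulVec_apply, Matrix.conjTranspose_apply,
    Matrix.mulVec, dotProduct, Pi.star_apply, star_sum, star_mul',
    Finset.sum_mul, Finset.mul_sum]
  apply Finset.sum_congr rfl
  intro p _
  apply Finset.sum_congr rfl
  intro q _
  ring

lemma aux_sum_mulVec {m k : ℕ} (M : Fin m → Matrix (Fin k) (Fin k) ℂ) (x : Fin k → ℂ) :
    (∑ i, M i) *ᵥ x = ∑ i, M i *ᵥ x := by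
  funext a
  simp only [Matrix.mulVec, dotProduct, Finset.sum_apply, Finset.sum_mul,
    Matrix.sum_apply]
  rw [Finset.sum_comm]

lemma aux_dot_sum {m k : ℕ} (u : Fin k → ℂ) (y : Fin m → (Fin k → ℂ)) :
    u ⬝ᵥ (∑ i, y i) = ∑ i, u ⬝ᵥ y i := by
  simp only [dotProduct, Finset.sum_apply, Finset.mul_sum]
  rw [Finset.sum_comm]

lemma aux_quad {k : ℕ} (a b x : Fin k → ℂ) :
    star x ⬝ᵥ (Matrix.vecMulVec a b *ᵥ x) = (star x ⬝ᵥ a) * (b ⬝ᵥ x) := by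
  simp only [dotProduct, Matrix.mulVec, Matrix.vecMulVec_apply, Pi.star_apply,
    dotProduct]
  rw [Finset.sum_mul_sum]
  rw [Finset.sum_congr rfl (fun p _ => Finset.mul_sum _ _ _)]
  apply Finset.sum_congr rfl
  intro p _
  apply Finset.sum_congr rfl
  intro q _
  ring

lemma aux_star_dot {k : ℕ} (w x : Fin k → ℂ) :
    star (star w ⬝ᵥ x) = star x ⬝ᵥ w := by
  simp only [dotProduct, star_sum, Pi.star_apply, star_mul', star_star]
  apply Finset.sum_congr rfl
  intro p _
  ring

lemma aux_sum_star_self_eq_zero {m : ℕ} (q : Fin m → ℂ) (h : ∑ i, star (q i) * q i = 0) :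
    ∀ i, q i = 0 := by
  have h2 : ∑ i, (Complex.normSq (q i) : ℂ) = 0 := by
    rw [← h]
    apply Finset.sum_congr rfl
    intro i _
    simp only [Complex.star_def]
    exact Complex.normSq_eq_conj_mul_self
  have h3 : ∑ i, Complex.normSq (q i) = 0 := by
    have := congrArg Complex.re h2
    simpa [Complex.ofReal_sum] using this
  intro i
  have := (Finset.sum_eq_zero_iff_of_nonneg
    (fun i _ => Complex.normSq_nonneg (q i))).mp h3 i (Finset.mem_univ i)
  exact Complex.normSq_eq_zero.mp this

lemma aux_span_of_sum_outer {m k : ℕ} (w : Fin m → (Fin k → ℂ)) (v : Fin k → ℂ)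
    (h : ∑ i, Matrix.vecMulVec (w i) (star (w i)) = Matrix.vecMulVec v (star v)) :
    ∀ i, ∃ c : ℂ, w i = c • v := by
  have key : ∀ x : Fin k → ℂ, ∑ i, star (star (w i) ⬝ᵥ x) * (star (w i) ⬝ᵥ x)
      = star (star v ⬝ᵥ x) * (star v ⬝ᵥ x) := by
    intro x
    have h1 := congrArg (fun M => star x ⬝ᵥ (M *ᵥ x)) h
    rw [aux_quad] at h1
    rw [aux_star_dot v x, ← h1, aux_sum_mulVec, aux_dot_sum]
    apply Finset.sum_congr rfl
    intro i _
    rw [aux_quad, aux_star_dot]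
  have key0 : ∀ x : Fin k → ℂ, star v ⬝ᵥ x = 0 → ∀ i, star (w i) ⬝ᵥ x = 0 := by
    intro x hx
    apply aux_sum_star_self_eq_zero
    rw [key x, hx, mul_zero]
  intro i
  by_cases hv : v = 0
  · refine ⟨0, ?_⟩
    funext a
    have := key0 (Pi.single a 1) (by simp [hv]) i
    simpa [dotProduct, Pi.single_apply, Finset.sum_ite_eq', mul_comm] using
      congrArg star this
  · have hs : star v ⬝ᵥ v ≠ 0 := fun hc => hv (dotProduct_star_self_eq_zero.mp hc)
    set c : ℂ := (star v ⬝ᵥ w i) / (star v ⬝ᵥ v) with hc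
    refine ⟨c, ?_⟩
    set y : Fin k → ℂ := w i - c • v with hy
    have hvy : star v ⬝ᵥ y = 0 := by
      rw [hy, dotProduct_sub, dotProduct_smul, hc, smul_eq_mul,
        div_mul_cancel₀ _ hs, sub_self]
    have hwy : star (w i) ⬝ᵥ y = 0 := key0 y hvy i
    have hyy : star y ⬝ᵥ y = 0 := by
      rw [hy]
      have : star (w i - c • v) = star (w i) - (star c) • star v := by
        funext a; simp [Pi.star_apply, star_sub, mul_comm]
      rw [this, sub_dotProduct, smul_dotProduct, ← hy, hwy, hvy,
        smul_eq_mul, mul_zero, sub_zero]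
    have : y = 0 := dotProduct_star_self_eq_zero.mp hyy
    have := sub_eq_zero.mp (hy ▸ this)
    exact this

end D
section E
open Matrix ComplexOrder

lemma aux_entropy_one_one : vnEntropy (1 : Matrix (Fin 1) (Fin 1) ℂ) = 0 := by
  have hone : (1 : Matrix (Fin 1) (Fin 1) ℂ).IsHermitian := Matrix.isHermitian_one
  rw [aux_vnEntropy_eq hone]
  have h := aux_entropy_eq hone (μ := fun _ => 1) (W := 1) (by simp)
    (by simp)
  rw [h]
  simp [Real.negMulLog_one]

lemma aux_pure_entropy {d : ℕ} (v : Fin d → ℂ) (hv : star v ⬝ᵥ v = 1) :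
    vnEntropy (Matrix.vecMulVec v (star v)) = 0 := by
  set V : Matrix (Fin d) (Fin 1) ℂ := Matrix.of (fun a _ => v a) with hVdef
  have hV : Vᴴ * V = 1 := by
    ext i j
    have : i = j := Subsingleton.elim i j
    subst this
    simpa [Matrix.mul_apply, Matrix.conjTranspose_apply, Matrix.one_apply, hVdef,
      dotProduct] using hv
  have key : Matrix.vecMulVec v (star v) = V * (1 : Matrix (Fin 1) (Fin 1) ℂ) * Vᴴ := by
    ext a b
    simp [Matrix.mul_apply, Matrix.vecMulVec_apply, hVdef, Matrix.conjTranspose_apply,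
      Matrix.one_apply]
  rw [key, aux_entropy_conj V hV Matrix.isHermitian_one, aux_entropy_one_one]

lemma aux_entropy_zero_rank_one {d : ℕ} {σ : Matrix (Fin d) (Fin d) ℂ}
    (hσ : σ.PosSemidef) (htr : σ.trace = 1) (hent : vnEntropy σ = 0) :
    ∃ w : Fin d → ℂ, σ = Matrix.vecMulVec w (star w) := by
  classical
  have hH := hσ.isHermitian
  set lam := hH.eigenvalues with hlam
  set U : Matrix (Fin d) (Fin d) ℂ := (hH.eigenvectorUnitary : Matrix (Fin d) (Fin d) ℂ)
    with hUdef
  have hUU : U * Uᴴ = 1 := by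
    rw [← Matrix.star_eq_conjTranspose]
    exact Matrix.mem_unitaryGroup_iff.mp hH.eigenvectorUnitary.2
  have hUU' : Uᴴ * U = 1 := mul_eq_one_comm.mp hUU
  have hspec : σ = U * Matrix.diagonal (fun i => ((lam i : ℝ) : ℂ)) * Uᴴ := by
    conv_lhs => rw [hH.spectral_theorem]
    rw [Unitary.conjStarAlgAut_apply]
    rw [Matrix.star_eq_conjTranspose]
    rfl
  have hnn : ∀ i, 0 ≤ lam i := fun i => hσ.eigenvalues_nonneg i
  have hsum : ∑ i, lam i = 1 := by
    have h1 : σ.trace = ((∑ i, lam i : ℝ) : ℂ) := by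
      conv_lhs => rw [hspec]
      rw [Matrix.trace_mul_cycle, hUU', Matrix.one_mul, Matrix.trace_diagonal]
      push_cast
      rfl
    rw [htr] at h1
    exact_mod_cast h1.symm
  have hle1 : ∀ i, lam i ≤ 1 := by
    intro i
    rw [← hsum]
    exact Finset.single_le_sum (fun j _ => hnn j) (Finset.mem_univ i)
  have hzero : ∀ i, Real.negMulLog (lam i) = 0 := by
    have hs : ∑ i, Real.negMulLog (lam i) = 0 := by
      rw [← aux_vnEntropy_eq hH]; exact hent
    intro i
    exact (Finset.sum_eq_zero_iff_of_nonneg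
      (fun j _ => Real.negMulLog_nonneg (hnn j) (hle1 j))).mp hs i (Finset.mem_univ i)
  have h01 : ∀ i, lam i = 0 ∨ lam i = 1 := by
    intro i
    have h := hzero i
    unfold Real.negMulLog at h
    rw [neg_mul, neg_eq_zero, mul_eq_zero] at h
    rcases h with h | h
    · exact Or.inl h
    · rcases Real.log_eq_zero.mp h with h | h | h
      · exact Or.inl h
      · exact Or.inr h
      · exact absurd h (by nlinarith [hnn i])
  obtain ⟨j, hj⟩ : ∃ j, lam j = 1 := by
    by_contra hcon
    push_neg at hcon
    have hz : ∀ i, lam i = 0 := fun i => (h01 i).resolve_right (hcon i)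
    rw [Finset.sum_congr rfl (fun i _ => hz i)] at hsum
    simp at hsum
  have hrest : ∀ i, i ≠ j → lam i = 0 := by
    intro i hij
    by_contra hcon
    have h1 : lam i = 1 := (h01 i).resolve_left hcon
    have h2 : ∑ c ∈ Finset.univ.erase j, lam c = 0 := by
      have := Finset.add_sum_erase Finset.univ lam (Finset.mem_univ j)
      rw [hsum, hj] at this
      linarith
    have h3 : lam i = 0 := (Finset.sum_eq_zero_iff_of_nonneg
      (fun c _ => hnn c)).mp h2 i (Finset.mem_erase.mpr ⟨hij, Finset.mem_univ i⟩)
    rw [h3] at h1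
    norm_num at h1
  refine ⟨fun a => U a j, ?_⟩
  have hlamIte : (fun i => ((lam i : ℝ) : ℂ)) = fun i => if i = j then 1 else 0 := by
    funext i
    by_cases h : i = j
    · subst h; rw [hj]; simp
    · rw [hrest i h]; simp [h]
  ext a b
  conv_lhs => rw [hspec]
  rw [aux_conj_diag_apply]
  rw [Finset.sum_congr rfl (fun c _ => by rw [congrFun hlamIte c])]
  rw [Finset.sum_eq_single j]
  · simp [Matrix.vecMulVec_apply]
  · intro c _ hc
    simp [hc]
  · intro h
    exact absurd (Finset.mem_univ j) h

end E
section F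
open Matrix ComplexOrder

def auxLI {k : ℕ} (x y : Fin k → ℂ) : Prop :=
  ∀ a b : ℂ, a • x + b • y = 0 → a = 0 ∧ b = 0

lemma auxLI_ne_zero_left {k : ℕ} {x y : Fin k → ℂ} (h : auxLI x y) : x ≠ 0 := by
  intro hx
  have := h 1 0 (by rw [hx]; simp)
  exact one_ne_zero this.1

lemma auxLI_ne_zero_right {k : ℕ} {x y : Fin k → ℂ} (h : auxLI x y) : y ≠ 0 := by
  intro hy
  have := h 0 1 (by rw [hy]; simp)
  exact one_ne_zero this.2

lemma auxLI_add_ne {k : ℕ} {x y : Fin k → ℂ} (h : auxLI x y) : x + y ≠ 0 := by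
  intro hxy
  have := h 1 1 (by rw [one_smul, one_smul]; exact hxy)
  exact one_ne_zero this.1

lemma auxLI_coeff {k : ℕ} {x y : Fin k → ℂ} (h : auxLI x y) {a b a' b' : ℂ}
    (e : a • x + b • y = a' • x + b' • y) : a = a' ∧ b = b' := by
  have h0 : (a - a') • x + (b - b') • y = 0 := by
    rw [sub_smul, sub_smul]
    rw [show a • x - a' • x + (b • y - b' • y) = (a • x + b • y) - (a' • x + b' • y) by abel, e,
      sub_self]
  have := h _ _ h0
  constructor
  · linear_combination this.1
  · linear_combination this.2

lemma auxLI_smul_left {k : ℕ} {x y : Fin k → ℂ} (h : auxLI x y) {t : ℂ} (ht : t ≠ 0) :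
    auxLI (t • x) y := by
  intro a b hab
  rw [smul_smul] at hab
  obtain ⟨h1, h2⟩ := h _ _ hab
  exact ⟨(mul_eq_zero.mp h1).resolve_right ht, h2⟩

lemma not_auxLI_elim {k : ℕ} {x y : Fin k → ℂ} (h : ¬ auxLI x y) (hx : x ≠ 0) :
    ∃ t : ℂ, y = t • x := by
  unfold auxLI at h
  push_neg at h
  obtain ⟨a, b, hab, hne⟩ := h
  by_cases hb : b = 0
  · subst hb
    have ha : a ≠ 0 := fun h0 => (hne h0) rfl
    rw [zero_smul, add_zero] at hab
    have hx0 : x = 0 := by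
      have := congrArg (fun z => a⁻¹ • z) hab
      simpa [smul_smul, inv_mul_cancel₀ ha] using this
    exact absurd hx0 hx
  · refine ⟨-a / b, ?_⟩
    have : b • y = -(a • x) := by
      rw [eq_neg_iff_add_eq_zero, add_comm]
      exact hab
    have h2 := congrArg (fun z => b⁻¹ • z) this
    simp only [smul_smul, inv_mul_cancel₀ hb, one_smul] at h2
    rw [h2, div_eq_mul_inv, neg_mul, neg_smul, ← smul_smul]
    rw [smul_comm]
    simp [neg_smul]

lemma aux_sumtrick {k : ℕ} {x y p q : Fin k → ℂ} (h : auxLI x y) {cx cy cz : ℂ}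
    (h1 : p = cx • x) (h2 : q = cy • y) (h3 : p + q = cz • (x + y)) : cx = cz ∧ cy = cz := by
  have e : cx • x + cy • y = cz • x + cz • y := by
    rw [← h1, ← h2, h3, smul_add]
  exact auxLI_coeff h e

end F
section G
open Matrix ComplexOrder

lemma aux_dichotomy {m k n : ℕ} (A : Fin m → Matrix (Fin k) (Fin n) ℂ)
    (H : ∀ ψ : Fin n → ℂ, ∃ u : Fin k → ℂ, ∀ i, ∃ c : ℂ, A i *ᵥ ψ = c • u) :
    (∃ B : Matrix (Fin k) (Fin n) ℂ, ∀ i, ∃ c : ℂ, A i = c • B) ∨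
    (∃ u : Fin k → ℂ, ∀ (i : Fin m) (ψ : Fin n → ℂ), ∃ c : ℂ, A i *ᵥ ψ = c • u) := by
  classical
  by_cases hB : ∃ (i₀ : Fin m) (ψ₁ ψ₂ : Fin n → ℂ), auxLI (A i₀ *ᵥ ψ₁) (A i₀ *ᵥ ψ₂)
  · left
    obtain ⟨i₀, ψ₁, ψ₂, hLI⟩ := hB
    have par : ∀ (i : Fin m) (ψ : Fin n → ℂ), A i₀ *ᵥ ψ ≠ 0 →
        ∃ c : ℂ, A i *ᵥ ψ = c • (A i₀ *ᵥ ψ) := by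
      intro i ψ h0
      obtain ⟨u, hu⟩ := H ψ
      obtain ⟨c₀, hc₀⟩ := hu i₀
      obtain ⟨ci, hci⟩ := hu i
      have hc₀0 : c₀ ≠ 0 := by
        rintro rfl
        rw [zero_smul] at hc₀
        exact h0 hc₀
      refine ⟨ci / c₀, ?_⟩
      rw [hci, hc₀, smul_smul, div_mul_cancel₀ _ hc₀0]
    have hv₁ : A i₀ *ᵥ ψ₁ ≠ 0 := auxLI_ne_zero_left hLI
    have hv₂ : A i₀ *ᵥ ψ₂ ≠ 0 := auxLI_ne_zero_right hLI
    refine ⟨A i₀, fun i => ?_⟩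
    obtain ⟨c₁, hc₁⟩ := par i ψ₁ hv₁
    obtain ⟨c₂, hc₂⟩ := par i ψ₂ hv₂
    have h12ne : A i₀ *ᵥ (ψ₁ + ψ₂) ≠ 0 := by
      rw [Matrix.mulVec_add]; exact auxLI_add_ne hLI
    obtain ⟨c₁₂, hc₁₂⟩ := par i (ψ₁ + ψ₂) h12ne
    rw [Matrix.mulVec_add, Matrix.mulVec_add] at hc₁₂
    have hcc := aux_sumtrick hLI hc₁ hc₂ hc₁₂
    have hc2eq : c₂ = c₁ := by rw [hcc.2, ← hcc.1]
    refine ⟨c₁, ?_⟩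
    have key : ∀ ψ : Fin n → ℂ, A i *ᵥ ψ = c₁ • (A i₀ *ᵥ ψ) := by
      intro ψ
      by_cases h0 : A i₀ *ᵥ ψ = 0
      · rw [h0, smul_zero]
        have e₁ : A i₀ *ᵥ (ψ + ψ₁) = A i₀ *ᵥ ψ₁ := by
          rw [Matrix.mulVec_add, h0, zero_add]
        have e₂ : A i₀ *ᵥ (ψ + ψ₂) = A i₀ *ᵥ ψ₂ := by
          rw [Matrix.mulVec_add, h0, zero_add]
        obtain ⟨d₁, hd₁⟩ := par i (ψ + ψ₁) (by rw [e₁]; exact hv₁)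
        obtain ⟨d₂, hd₂⟩ := par i (ψ + ψ₂) (by rw [e₂]; exact hv₂)
        rw [Matrix.mulVec_add, e₁] at hd₁
        rw [Matrix.mulVec_add, e₂] at hd₂
        have g₁ : A i *ᵥ ψ = (d₁ - c₁) • (A i₀ *ᵥ ψ₁) := by
          rw [sub_smul, ← hc₁, eq_sub_iff_add_eq]
          exact hd₁
        have g₂ : A i *ᵥ ψ = (d₂ - c₂) • (A i₀ *ᵥ ψ₂) := by
          rw [sub_smul, ← hc₂, eq_sub_iff_add_eq]
          exact hd₂
        have hzz : (d₁ - c₁) • (A i₀ *ᵥ ψ₁) + (-(d₂ - c₂)) • (A i₀ *ᵥ ψ₂) = 0 := by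
          rw [neg_smul, ← g₁, ← g₂, add_neg_cancel]
        have hz := hLI _ _ hzz
        rw [g₁, hz.1, zero_smul]
      · obtain ⟨cψ, hcψ⟩ := par i ψ h0
        suffices hs : cψ = c₁ by rw [hcψ, hs]
        by_cases hli : auxLI (A i₀ *ᵥ ψ) (A i₀ *ᵥ ψ₁)
        · have hne : A i₀ *ᵥ (ψ + ψ₁) ≠ 0 := by
            rw [Matrix.mulVec_add]; exact auxLI_add_ne hli
          obtain ⟨d, hd⟩ := par i (ψ + ψ₁) hne
          rw [Matrix.mulVec_add, Matrix.mulVec_add] at hd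
          have hst := aux_sumtrick hli hcψ hc₁ hd
          rw [hst.1, ← hst.2]
        · obtain ⟨t, ht⟩ := not_auxLI_elim hli h0
          have ht0 : t ≠ 0 := by
            rintro rfl
            rw [zero_smul] at ht
            exact hv₁ ht
          have hli2 : auxLI (A i₀ *ᵥ ψ) (A i₀ *ᵥ ψ₂) := by
            intro a b hab
            have hx : A i₀ *ᵥ ψ = t⁻¹ • (A i₀ *ᵥ ψ₁) := by
              rw [ht, smul_smul, inv_mul_cancel₀ ht0, one_smul]
            rw [hx, smul_smul] at hab
            obtain ⟨h1, h2⟩ := hLI _ _ hab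
            refine ⟨?_, h2⟩
            rcases mul_eq_zero.mp h1 with h | h
            · exact h
            · exact absurd h (inv_ne_zero ht0)
          have hne : A i₀ *ᵥ (ψ + ψ₂) ≠ 0 := by
            rw [Matrix.mulVec_add]; exact auxLI_add_ne hli2
          obtain ⟨d, hd⟩ := par i (ψ + ψ₂) hne
          rw [Matrix.mulVec_add, Matrix.mulVec_add] at hd
          have hst := aux_sumtrick hli2 hcψ hc₂ hd
          rw [hst.1, ← hst.2, hc2eq]
    ext a b
    have h := congrFun (key (Pi.single b 1)) a
    simp only [Matrix.mulVec_single, mul_one, Pi.smul_apply, smul_eq_mul] at h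
    simpa [Matrix.smul_apply, smul_eq_mul] using h
  · right
    push_neg at hB
    by_cases hz : ∀ (i : Fin m) (ψ : Fin n → ℂ), A i *ᵥ ψ = 0
    · exact ⟨0, fun i ψ => ⟨0, by rw [hz i ψ, zero_smul]⟩⟩
    · push_neg at hz
      obtain ⟨i₁, ψ₀, hne⟩ := hz
      set u := A i₁ *ᵥ ψ₀ with hu
      have spanAt : ∀ (ψ : Fin n → ℂ), A i₁ *ᵥ ψ ≠ 0 → ∀ i, ∃ c : ℂ, A i *ᵥ ψ = c • u := by
        intro ψ hψ i
        obtain ⟨u', hu'⟩ := H ψ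
        obtain ⟨c', hc'⟩ := hu' i₁
        obtain ⟨c, hc⟩ := hu' i
        have hc'0 : c' ≠ 0 := by
          rintro rfl
          rw [zero_smul] at hc'
          exact hψ hc'
        obtain ⟨t, ht⟩ := not_auxLI_elim (hB i₁ ψ₀ ψ) hne
        have hu'eq : u' = (c'⁻¹ * t) • u := by
          have hts := hc'.symm.trans ht
          calc u' = c'⁻¹ • (c' • u') := by rw [smul_smul, inv_mul_cancel₀ hc'0, one_smul]
            _ = c'⁻¹ • (t • u) := by rw [hts]
            _ = (c'⁻¹ * t) • u := by rw [smul_smul]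
        exact ⟨c * (c'⁻¹ * t), by rw [hc, hu'eq, smul_smul]⟩
      refine ⟨u, fun i ψ => ?_⟩
      by_cases h1 : A i₁ *ᵥ ψ = 0
      · have e : A i₁ *ᵥ (ψ + ψ₀) = u := by rw [Matrix.mulVec_add, h1, zero_add]
        obtain ⟨d, hd⟩ := spanAt (ψ + ψ₀) (by rw [e]; exact hne) i
        obtain ⟨f, hf⟩ := spanAt ψ₀ hne i
        refine ⟨d - f, ?_⟩
        rw [Matrix.mulVec_add] at hd
        have hsub : A i *ᵥ ψ = d • u - f • u := by
          rw [← hd, ← hf, add_sub_cancel_right]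
        rw [hsub, sub_smul]
      · exact spanAt ψ h1 i

end G
section H
open Matrix ComplexOrder

lemma aux_phi_psd {n k m : ℕ} (A : Fin m → Matrix (Fin k) (Fin n) ℂ)
    {ρ : Matrix (Fin n) (Fin n) ℂ} (hρ : ρ.PosSemidef) :
    (∑ i, A i * ρ * (A i)ᴴ).PosSemidef := by
  classical
  exact Finset.sum_induction _ _ (fun a b ha hb => ha.add hb) Matrix.PosSemidef.zero
    (fun i _ => hρ.mul_mul_conjTranspose_same (A i))

lemma aux_phi_trace {n k m : ℕ} (A : Fin m → Matrix (Fin k) (Fin n) ℂ)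
    (hA : ∑ i, (A i)ᴴ * A i = 1) (ρ : Matrix (Fin n) (Fin n) ℂ) :
    (∑ i, A i * ρ * (A i)ᴴ).trace = ρ.trace := by
  rw [Matrix.trace_sum]
  calc ∑ i, (A i * ρ * (A i)ᴴ).trace = ∑ i, ((A i)ᴴ * A i * ρ).trace := by
        apply Finset.sum_congr rfl
        intro i _
        rw [Matrix.trace_mul_cycle, Matrix.mul_assoc]
    _ = (∑ i, (A i)ᴴ * A i * ρ).trace := (Matrix.trace_sum _ _).symm
    _ = ((∑ i, (A i)ᴴ * A i) * ρ).trace := by rw [Finset.sum_mul]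
    _ = ρ.trace := by rw [hA, Matrix.one_mul]

lemma aux_dot_normSq {d : ℕ} (v : Fin d → ℂ) :
    star v ⬝ᵥ v = ((∑ a, Complex.normSq (v a) : ℝ) : ℂ) := by
  push_cast
  apply Finset.sum_congr rfl
  intro a _
  simp only [Pi.star_apply, Complex.star_def]
  exact Complex.normSq_eq_conj_mul_self.symm

lemma aux_left_case {n k m : ℕ} (hn : 0 < n) (A : Fin m → Matrix (Fin k) (Fin n) ℂ)
    (hA : ∑ i, (A i)ᴴ * A i = 1) (B : Matrix (Fin k) (Fin n) ℂ)
    (hB : ∀ i, ∃ c : ℂ, A i = c • B) :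
    ∃ V : Matrix (Fin k) (Fin n) ℂ, Vᴴ * V = 1 ∧
      ∀ X : Matrix (Fin n) (Fin n) ℂ, ∑ i, A i * X * (A i)ᴴ = V * X * Vᴴ := by
  classical
  choose c hc using hB
  set s : ℂ := ∑ i, star (c i) * c i with hs
  have hterm : ∀ i, (A i)ᴴ * A i = (star (c i) * c i) • (Bᴴ * B) := by
    intro i
    rw [hc i, Matrix.conjTranspose_smul, Matrix.smul_mul, Matrix.mul_smul, smul_smul]
  have hsB : s • (Bᴴ * B) = 1 := by
    rw [← hA, Finset.sum_congr rfl fun i _ => hterm i, ← Finset.sum_smul]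
  have hs_real : s = ((∑ i, Complex.normSq (c i) : ℝ) : ℂ) := by
    rw [hs]
    push_cast
    apply Finset.sum_congr rfl
    intro i _
    simp only [Complex.star_def]
    exact Complex.normSq_eq_conj_mul_self.symm
  set t : ℝ := ∑ i, Complex.normSq (c i) with ht
  have ht0 : t ≠ 0 := by
    intro h0
    rw [hs_real, h0] at hsB
    have h1 := congrFun (congrFun hsB ⟨0, hn⟩) ⟨0, hn⟩
    simp [Matrix.one_apply] at h1
  have htpos : 0 < t :=
    lt_of_le_of_ne (Finset.sum_nonneg fun i _ => Complex.normSq_nonneg _) (Ne.symm ht0)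
  have hsqrt : ((Real.sqrt t : ℝ) : ℂ) * ((Real.sqrt t : ℝ) : ℂ) = s := by
    rw [hs_real, ← Complex.ofReal_mul, Real.mul_self_sqrt htpos.le, ht]
  refine ⟨((Real.sqrt t : ℝ) : ℂ) • B, ?_, ?_⟩
  · rw [Matrix.conjTranspose_smul, Matrix.smul_mul, Matrix.mul_smul, smul_smul]
    have hst : star ((Real.sqrt t : ℝ) : ℂ) = ((Real.sqrt t : ℝ) : ℂ) := by
      rw [Complex.star_def, Complex.conj_ofReal]
    rw [hst, hsqrt, hsB]
  · intro X
    have hterm2 : ∀ i, A i * X * (A i)ᴴ = (star (c i) * c i) • (B * X * Bᴴ) := by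
      intro i
      rw [hc i, Matrix.conjTranspose_smul, Matrix.smul_mul, Matrix.smul_mul, Matrix.mul_smul,
        smul_smul, mul_comm (c i)]
    rw [Finset.sum_congr rfl fun i _ => hterm2 i, ← Finset.sum_smul, ← hs]
    rw [Matrix.conjTranspose_smul, Matrix.smul_mul, Matrix.smul_mul, Matrix.mul_smul, smul_smul]
    have hst : star ((Real.sqrt t : ℝ) : ℂ) = ((Real.sqrt t : ℝ) : ℂ) := by
      rw [Complex.star_def, Complex.conj_ofReal]
    rw [hst, hsqrt]

end H
lemma aux_vecMulVec_conj {k n : ℕ} (u : Fin k → ℂ) (z : Fin n → ℂ)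
    (ρ : Matrix (Fin n) (Fin n) ℂ) :
    Matrix.vecMulVec u z * ρ * (Matrix.vecMulVec u z)ᴴ
      = (star (star z) ⬝ᵥ (ρ *ᵥ star z)) • Matrix.vecMulVec u (star u) := by
  ext a b
  simp only [Matrix.mul_apply, Matrix.vecMulVec_apply, Matrix.conjTranspose_apply,
    Matrix.smul_apply, dotProduct, Matrix.mulVec, Pi.star_apply, star_star,
    star_mul', smul_eq_mul, Finset.sum_mul, Finset.mul_sum]
  rw [Finset.sum_comm]
  apply Finset.sum_congr rfl
  intro p _
  apply Finset.sum_congr rfl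
  intro q _
  ring


end AUX

/-- A quantum channel in Kraus form,
`Φ(X) = ∑ᵢ Aᵢ X Aᵢᴴ` with `∑ᵢ Aᵢᴴ Aᵢ = 1`, preserves the von Neumann entropy
of every density matrix if and only if `Φ(X) = V X Vᴴ` for some isometry `V`
(`Vᴴ V = 1`). -/
theorem channel_entropy_preserving_iff_isometry {n k m : ℕ}
    (A : Fin m → Matrix (Fin k) (Fin n) ℂ)
    (hA : ∑ i, (A i)ᴴ * A i = 1)
    (Φ : Matrix (Fin n) (Fin n) ℂ → Matrix (Fin k) (Fin k) ℂ)
    (hΦ : ∀ X, Φ X = ∑ i, A i * X * (A i)ᴴ) :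
    (∀ ρ : Matrix (Fin n) (Fin n) ℂ, ρ.PosSemidef → ρ.trace = 1 →
        vnEntropy (Φ ρ) = vnEntropy ρ)
    ↔ ∃ V : Matrix (Fin k) (Fin n) ℂ, Vᴴ * V = 1 ∧
        ∀ X : Matrix (Fin n) (Fin n) ℂ, Φ X = V * X * Vᴴ := by
  constructor
  · intro hS
    by_cases hn0 : n = 0
    · subst hn0
      refine ⟨0, Subsingleton.elim _ _, fun X => ?_⟩
      rw [hΦ X]
      have h1 : ∀ i : Fin m, A i * X = 0 := by
        intro i
        ext a b
        simp [Matrix.mul_apply]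
      rw [Finset.sum_congr rfl fun i _ => by rw [h1 i, Matrix.zero_mul]]
      simp
    have hn : 0 < n := Nat.pos_of_ne_zero hn0
    have pure : ∀ v : Fin n → ℂ, star v ⬝ᵥ v = 1 →
        ∃ w : Fin k → ℂ, ∀ i, ∃ c : ℂ, A i *ᵥ v = c • w := by
      intro v hv
      set ρ := Matrix.vecMulVec v (star v) with hρdef
      have hρP : ρ.PosSemidef := aux_vecMulVec_psd v
      have hρtr : ρ.trace = 1 := by rw [hρdef, aux_vecMulVec_trace]; exact hv
      have hentρ : vnEntropy ρ = 0 := aux_pure_entropy v hv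
      have hent2 : vnEntropy (Φ ρ) = 0 := by rw [hS ρ hρP hρtr, hentρ]
      have hPSD : (Φ ρ).PosSemidef := by rw [hΦ]; exact aux_phi_psd A hρP
      have htr1 : (Φ ρ).trace = 1 := by rw [hΦ, aux_phi_trace A hA, hρtr]
      obtain ⟨w, hw⟩ := aux_entropy_zero_rank_one hPSD htr1 hent2
      have hsum : ∑ i, Matrix.vecMulVec (A i *ᵥ v) (star (A i *ᵥ v))
          = Matrix.vecMulVec w (star w) := by
        rw [← hw, hΦ]
        exact Finset.sum_congr rfl fun i _ => (aux_kraus_term (A i) v).symm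
      exact ⟨w, aux_span_of_sum_outer _ w hsum⟩
    have H : ∀ ψ : Fin n → ℂ, ∃ u : Fin k → ℂ, ∀ i, ∃ c : ℂ, A i *ᵥ ψ = c • u := by
      intro ψ
      by_cases hψ0 : ψ = 0
      · exact ⟨0, fun i => ⟨0, by rw [hψ0, Matrix.mulVec_zero, zero_smul]⟩⟩
      · have hpos : 0 < ∑ a, Complex.normSq (ψ a) := by
          obtain ⟨a, ha⟩ : ∃ a, ψ a ≠ 0 := by
            by_contra hcon
            push_neg at hcon
            exact hψ0 (funext hcon)
          exact Finset.sum_pos' (fun b _ => Complex.normSq_nonneg _)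
            ⟨a, Finset.mem_univ a, Complex.normSq_pos.mpr ha⟩
        set r : ℝ := Real.sqrt (∑ a, Complex.normSq (ψ a)) with hrdef
        have hr : 0 < r := Real.sqrt_pos.mpr hpos
        set v : Fin n → ℂ := ((r : ℝ) : ℂ)⁻¹ • ψ with hvdef
        have hunit : star v ⬝ᵥ v = 1 := by
          rw [hvdef]
          have hsv : star (((r : ℝ) : ℂ)⁻¹ • ψ) = ((r : ℝ) : ℂ)⁻¹ • star ψ := by
            funext a
            simp only [Pi.smul_apply, Pi.star_apply, smul_eq_mul, star_mul']
            rw [star_inv₀, Complex.star_def, Complex.conj_ofReal, mul_comm]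
          rw [hsv, smul_dotProduct, dotProduct_smul, aux_dot_normSq,
            smul_eq_mul, smul_eq_mul]
          rw [← mul_assoc, ← mul_inv]
          rw [show ((r : ℝ) : ℂ) * ((r : ℝ) : ℂ) = ((∑ a, Complex.normSq (ψ a) : ℝ) : ℂ) by
            rw [← Complex.ofReal_mul, hrdef, Real.mul_self_sqrt hpos.le]]
          rw [inv_mul_cancel₀]
          exact_mod_cast hpos.ne'
        obtain ⟨w, hw⟩ := pure v hunit
        refine ⟨w, fun i => ?_⟩
        obtain ⟨c, hc⟩ := hw i
        refine ⟨((r : ℝ) : ℂ) * c, ?_⟩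
        have hψv : ψ = ((r : ℝ) : ℂ) • v := by
          rw [hvdef, smul_smul, mul_inv_cancel₀ (by exact_mod_cast hr.ne'), one_smul]
        rw [hψv, Matrix.mulVec_smul, hc, smul_smul]
    rcases aux_dichotomy A H with ⟨B, hB⟩ | ⟨u, hu⟩
    · obtain ⟨V, hV1, hV2⟩ := aux_left_case hn A hA B hB
      exact ⟨V, hV1, fun X => by rw [hΦ X]; exact hV2 X⟩
    · by_cases hn1 : n = 1
      · set B : Matrix (Fin k) (Fin n) ℂ := Matrix.of (fun a _ => u a) with hBdef
        have hB : ∀ i, ∃ c : ℂ, A i = c • B := by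
          intro i
          obtain ⟨c, hc⟩ := hu i (Pi.single ⟨0, hn⟩ 1)
          refine ⟨c, ?_⟩
          ext a b
          have hb : b = ⟨0, hn⟩ := by
            apply Fin.ext
            have := b.isLt
            omega
          have h2 := congrFun hc a
          simp only [Matrix.mulVec_single, mul_one, Pi.smul_apply, smul_eq_mul] at h2
          rw [hb]
          simpa [hBdef, Matrix.smul_apply, smul_eq_mul] using h2
        obtain ⟨V, hV1, hV2⟩ := aux_left_case hn A hA B hB
        exact ⟨V, hV1, fun X => by rw [hΦ X]; exact hV2 X⟩
      · exfalso
        have hn2 : 2 ≤ n := by omega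
        have hstruct : ∀ i, ∃ z : Fin n → ℂ, A i = Matrix.vecMulVec u z := by
          intro i
          choose cb hcb using fun b => hu i (Pi.single b 1)
          refine ⟨cb, ?_⟩
          ext a b
          have h2 := congrFun (hcb b) a
          simp only [Matrix.mulVec_single, mul_one, Pi.smul_apply, smul_eq_mul] at h2
          rw [Matrix.vecMulVec_apply, mul_comm]
          simpa using h2
        choose z hz using hstruct
        set ρ : Matrix (Fin n) (Fin n) ℂ :=
          Matrix.diagonal (fun _ => (((n : ℝ)⁻¹ : ℝ) : ℂ)) with hρdef
        have hd0 : (0 : Fin n → ℂ) ≤ fun _ => (((n : ℝ)⁻¹ : ℝ) : ℂ) := by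
          intro i
          rw [Pi.zero_apply, Complex.nonneg_iff]
          constructor
          · simp only [Complex.ofReal_re]
            positivity
          · simp
        have hρP : ρ.PosSemidef := Matrix.PosSemidef.diagonal hd0
        have hρtr : ρ.trace = 1 := by
          rw [hρdef, Matrix.trace_diagonal, Finset.sum_const, Finset.card_univ,
            Fintype.card_fin, nsmul_eq_mul]
          rw [← Complex.ofReal_natCast, ← Complex.ofReal_mul, mul_inv_cancel₀
            (by exact_mod_cast hn.ne')]
          simp
        have hρW : ρ = 1 * Matrix.diagonal (fun _ : Fin n => (((n : ℝ)⁻¹ : ℝ) : ℂ))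
            * (1 : Matrix (Fin n) (Fin n) ℂ)ᴴ := by
          rw [hρdef]
          simp
        have hρent : vnEntropy ρ = Real.log n := by
          rw [aux_vnEntropy_eq hρP.1, aux_entropy_eq hρP.1 (by simp) hρW,
            Finset.sum_const, Finset.card_univ, Fintype.card_fin, nsmul_eq_mul]
          rw [Real.negMulLog, Real.log_inv]
          field_simp
        have hT0 : ∀ i, 0 ≤ star (star (z i)) ⬝ᵥ (ρ *ᵥ star (z i)) := fun i => hρP.dotProduct_mulVec_nonneg _
        set T : ℂ := ∑ i, star (star (z i)) ⬝ᵥ (ρ *ᵥ star (z i)) with hTdef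
        have hTnn : 0 ≤ T := Finset.sum_nonneg fun i _ => hT0 i
        have hΦρ : Φ ρ = T • Matrix.vecMulVec u (star u) := by
          rw [hΦ, Finset.sum_congr rfl fun i _ => by rw [hz i, aux_vecMulVec_conj],
            ← Finset.sum_smul]
        set Tr : ℝ := T.re with hTrdef
        have hTre : T = ((Tr : ℝ) : ℂ) := by
          obtain ⟨h1, h2⟩ := Complex.nonneg_iff.mp hTnn
          apply Complex.ext
          · simp [hTrdef]
          · simp [hTrdef, ← h2]
        have hTrnn : 0 ≤ Tr := (Complex.nonneg_iff.mp hTnn).1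
        set w : Fin k → ℂ := ((Real.sqrt Tr : ℝ) : ℂ) • u with hwdef
        have hww : Matrix.vecMulVec w (star w) = T • Matrix.vecMulVec u (star u) := by
          ext a b
          rw [hTre]
          simp only [hwdef, Matrix.vecMulVec_apply, Matrix.smul_apply, Pi.smul_apply,
            Pi.star_apply, smul_eq_mul, star_mul', Complex.star_def, Complex.conj_ofReal]
          have hsq : ((Real.sqrt Tr : ℝ) : ℂ) * ((Real.sqrt Tr : ℝ) : ℂ) = ((Tr : ℝ) : ℂ) := by
            rw [← Complex.ofReal_mul, Real.mul_self_sqrt hTrnn]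
          linear_combination (u a * (starRingEnd ℂ) (u b)) * hsq
        have hΦρw : Φ ρ = Matrix.vecMulVec w (star w) := by rw [hΦρ, hww]
        have htrΦ : (Φ ρ).trace = 1 := by rw [hΦ, aux_phi_trace A hA, hρtr]
        have hwunit : star w ⬝ᵥ w = 1 := by
          rw [← aux_vecMulVec_trace, ← hΦρw, htrΦ]
        have hentΦ : vnEntropy (Φ ρ) = 0 := by
          rw [hΦρw]
          exact aux_pure_entropy w hwunit
        have hpres := hS ρ hρP hρtr
        rw [hentΦ, hρent] at hpres
        have hlog : 0 < Real.log n := Real.log_pos (by exact_mod_cast hn2)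
        linarith
  · rintro ⟨V, hV, hVX⟩ ρ hρ _
    rw [hVX ρ]
    exact aux_entropy_conj V hV hρ.isHermitian
end

section
/- Let n ≥ 2 and let u, v ∈ ℂⁿ be unit vectors. Consider the density matrix σ = (1/2)·(u·uᴴ + v·vᴴ) (where x·xᴴ denotes the rank-one matrix with entries xᵢ·conj(xⱼ)). If the von Neumann entropy of σ equals log 2, then ⟨u, v⟩ = 0. -/
open Matrix ComplexOrder

section Aux

lemma myVecMulVec_mulVec {n : ℕ} (w v x : Fin n → ℂ) :
    vecMulVec w v *ᵥ x = (v ⬝ᵥ x) • w := by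
  ext i
  simp only [vecMulVec, mulVec, dotProduct, of_apply, Pi.smul_apply, smul_eq_mul,
    Finset.sum_mul, Finset.mul_sum]
  exact Finset.sum_congr rfl fun j _ => by ring

lemma myVecMulVec_mul {n : ℕ} (a b c d : Fin n → ℂ) :
    vecMulVec a b * vecMulVec c d = (b ⬝ᵥ c) • vecMulVec a d := by
  ext i j
  simp only [vecMulVec, mul_apply, dotProduct, of_apply, Matrix.smul_apply, smul_eq_mul,
    Finset.sum_mul, Finset.mul_sum]
  exact Finset.sum_congr rfl fun k _ => by ring

lemma myTrace_vecMulVec {n : ℕ} (a b : Fin n → ℂ) :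
    trace (vecMulVec a b) = a ⬝ᵥ b := by
  simp [trace, vecMulVec, diag, dotProduct]

lemma myHerm {n : ℕ} (u : Fin n → ℂ) : (vecMulVec u (star u)).IsHermitian := by
  ext i j
  simp [conjTranspose_apply, vecMulVec, mul_comm]

lemma myPSD {n : ℕ} (u v : Fin n → ℂ)
    (σ : Matrix (Fin n) (Fin n) ℂ)
    (hσ : σ = (1 / 2 : ℂ) • (vecMulVec u (star u) + vecMulVec v (star v))) :
    σ.PosSemidef := by
  refine posSemidef_iff_dotProduct_mulVec.mpr ⟨?_, ?_⟩
  · rw [hσ, IsHermitian, conjTranspose_smul]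
    rw [((myHerm u).add (myHerm v)).eq]
    norm_num
  · intro x
    rw [hσ]
    have : ((1 / 2 : ℂ) • (vecMulVec u (star u) + vecMulVec v (star v))) *ᵥ x
        = (1/2 : ℂ) • ((star u ⬝ᵥ x) • u + (star v ⬝ᵥ x) • v) := by
      rw [smul_mulVec, add_mulVec, myVecMulVec_mulVec, myVecMulVec_mulVec]
    rw [this]
    have hterm : ∀ w : Fin n → ℂ, star x ⬝ᵥ ((star w ⬝ᵥ x) • w)
        = (star w ⬝ᵥ x) * star (star w ⬝ᵥ x) := by
      intro w
      rw [dotProduct_smul]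
      congr 1
      simp only [dotProduct, star_sum, star_mul', star_star, Pi.star_apply]
      exact Finset.sum_congr rfl fun i _ => mul_comm _ _
    rw [dotProduct_smul, dotProduct_add, hterm u, hterm v]
    have h1 : 0 ≤ (star u ⬝ᵥ x) * star (star u ⬝ᵥ x) := mul_star_self_nonneg _
    have h2 : 0 ≤ (star v ⬝ᵥ x) * star (star v ⬝ᵥ x) := mul_star_self_nonneg _
    have := add_nonneg h1 h2
    rw [smul_eq_mul]
    have hhalf : (0:ℂ) ≤ 1/2 := by
      rw [Complex.le_def]; norm_num
    exact mul_nonneg hhalf this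

lemma myTraceEig {n : ℕ} {A : Matrix (Fin n) (Fin n) ℂ} (hA : A.IsHermitian) :
    A.trace = ∑ i, (hA.eigenvalues i : ℂ) := by
  conv_lhs => rw [hA.spectral_theorem, Unitary.conjStarAlgAut_apply]
  rw [trace_mul_cycle]
  rw [(Matrix.mem_unitaryGroup_iff').mp (hA.eigenvectorUnitary).2]
  rw [one_mul, trace_diagonal]
  rfl

lemma mySqHalf {n : ℕ} {A : Matrix (Fin n) (Fin n) ℂ} (hA : A.IsHermitian)
    (h : ∀ i, hA.eigenvalues i = 1/2 ∨ hA.eigenvalues i = 0) :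
    A * A = (1/2 : ℂ) • A := by
  have hUU : (star (hA.eigenvectorUnitary : Matrix (Fin n) (Fin n) ℂ)) *
      (hA.eigenvectorUnitary : Matrix (Fin n) (Fin n) ℂ) = 1 :=
    (Matrix.mem_unitaryGroup_iff').mp (hA.eigenvectorUnitary).2
  set U : Matrix (Fin n) (Fin n) ℂ := (hA.eigenvectorUnitary : Matrix (Fin n) (Fin n) ℂ) with hU
  set D : Matrix (Fin n) (Fin n) ℂ := diagonal (RCLike.ofReal ∘ hA.eigenvalues) with hD
  have hDD : D * D = (1/2 : ℂ) • D := by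
    have hfun : (fun i => (RCLike.ofReal ∘ hA.eigenvalues) i * (RCLike.ofReal ∘ hA.eigenvalues) i)
        = (1/2 : ℂ) • fun i => ((hA.eigenvalues i : ℂ)) := by
      funext i
      rcases h i with hi | hi <;> simp [hi]
    rw [hD, diagonal_mul_diagonal, hfun, diagonal_smul]
    rfl
  conv_lhs => rw [hA.spectral_theorem, Unitary.conjStarAlgAut_apply]
  conv_rhs => rw [hA.spectral_theorem, Unitary.conjStarAlgAut_apply]
  rw [show (U * D * star U) * (U * D * star U) = U * (D * (star U * U) * D) * star U by
    noncomm_ring]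
  rw [hUU, mul_one, hDD]
  rw [Matrix.mul_smul, Matrix.smul_mul]

lemma myRank {n : ℕ} (u v : Fin n → ℂ)
    (σ : Matrix (Fin n) (Fin n) ℂ)
    (hσ : σ = (1 / 2 : ℂ) • (vecMulVec u (star u) + vecMulVec v (star v))) :
    σ.rank ≤ 2 := by
  classical
  have hrange : LinearMap.range σ.mulVecLin ≤ Submodule.span ℂ {u, v} := by
    rintro y ⟨x, rfl⟩
    have : σ.mulVecLin x = (1/2 : ℂ) • ((star u ⬝ᵥ x) • u + (star v ⬝ᵥ x) • v) := by
      rw [mulVecLin_apply, hσ, smul_mulVec, add_mulVec,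
        myVecMulVec_mulVec, myVecMulVec_mulVec]
    rw [this]
    refine Submodule.smul_mem _ _ (Submodule.add_mem _ ?_ ?_)
    · exact Submodule.smul_mem _ _ (Submodule.subset_span (by simp))
    · exact Submodule.smul_mem _ _ (Submodule.subset_span (by simp))
  have h1 : σ.rank ≤ Module.finrank ℂ (Submodule.span ℂ ({u, v} : Set (Fin n → ℂ))) :=
    Submodule.finrank_mono hrange
  refine h1.trans ?_
  refine (finrank_span_le_card ({u, v} : Set (Fin n → ℂ))).trans ?_
  have : ({u, v} : Set (Fin n → ℂ)).toFinset = {u, v} := by simp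
  rw [this]
  exact (Finset.card_insert_le _ _).trans (by simp)

lemma myTangent {x : ℝ} (hx : 0 < x) :
    Real.negMulLog x ≤ x * Real.log 2 + (1/2 - x) := by
  have h := Real.log_le_sub_one_of_pos (x := 1/(2*x)) (by positivity)
  have h2 : x * Real.log (1/(2*x)) ≤ x * (1/(2*x) - 1) :=
    mul_le_mul_of_nonneg_left h hx.le
  have h3 : Real.log (1/(2*x)) = -(Real.log 2 + Real.log x) := by
    rw [one_div, Real.log_inv, Real.log_mul (by norm_num) hx.ne']
  have h4 : x * (1/(2*x) - 1) = 1/2 - x := by field_simp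
  rw [h3, h4] at h2
  rw [Real.negMulLog]
  nlinarith

lemma myTangentStrict {x : ℝ} (hx : 0 < x) (hne : x ≠ 1/2) :
    Real.negMulLog x < x * Real.log 2 + (1/2 - x) := by
  have h : Real.log (1/(2*x)) < 1/(2*x) - 1 := by
    apply Real.log_lt_sub_one_of_pos (by positivity)
    intro hc
    apply hne
    field_simp at hc
    linarith
  have h2 : x * Real.log (1/(2*x)) < x * (1/(2*x) - 1) :=
    mul_lt_mul_of_pos_left h hx
  have h3 : Real.log (1/(2*x)) = -(Real.log 2 + Real.log x) := by
    rw [one_div, Real.log_inv, Real.log_mul (by norm_num) hx.ne']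
  have h4 : x * (1/(2*x) - 1) = 1/2 - x := by field_simp
  rw [h3, h4] at h2
  rw [Real.negMulLog]
  nlinarith

lemma myEigHalf {ι : Type*} [Fintype ι] [DecidableEq ι] (f : ι → ℝ) (h0 : ∀ i, 0 ≤ f i)
    (hsum : ∑ i, f i = 1) (hcard : Fintype.card {i // f i ≠ 0} ≤ 2)
    (hent : ∑ i, Real.negMulLog (f i) = Real.log 2) :
    ∀ i, f i = 1/2 ∨ f i = 0 := by
  classical
  set S : Finset ι := Finset.univ.filter (fun i => f i ≠ 0) with hS
  have hScard : (S.card : ℝ) ≤ 2 := by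
    have : S.card = Fintype.card {i // f i ≠ 0} := (Fintype.card_subtype _).symm
    rw [this]; exact_mod_cast hcard
  have hsumS : ∑ i ∈ S, f i = 1 := by
    rw [← hsum]; exact Finset.sum_filter_of_ne (fun x _ h => h)
  have hentS : ∑ i ∈ S, Real.negMulLog (f i) = Real.log 2 := by
    rw [← hent]
    refine Finset.sum_filter_of_ne (fun x _ h hfx => ?_)
    rw [hfx] at h; simp [Real.negMulLog] at h
  have hpos : ∀ i ∈ S, 0 < f i := fun i hi =>
    lt_of_le_of_ne (h0 i) (Ne.symm (by simpa [hS] using hi))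
  have hub : ∑ i ∈ S, (f i * Real.log 2 + (1/2 - f i)) ≤ Real.log 2 := by
    rw [Finset.sum_add_distrib, ← Finset.sum_mul, hsumS, Finset.sum_sub_distrib, hsumS]
    simp only [Finset.sum_const, nsmul_eq_mul]
    nlinarith
  have hle : ∀ i ∈ S, Real.negMulLog (f i) ≤ f i * Real.log 2 + (1/2 - f i) :=
    fun i hi => myTangent (hpos i hi)
  have heq : ∀ i ∈ S, Real.negMulLog (f i) = f i * Real.log 2 + (1/2 - f i) := by
    by_contra hc
    push_neg at hc
    obtain ⟨i₀, hi₀, hne⟩ := hc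
    have hstrict : ∑ i ∈ S, Real.negMulLog (f i) <
        ∑ i ∈ S, (f i * Real.log 2 + (1/2 - f i)) :=
      Finset.sum_lt_sum hle ⟨i₀, hi₀, lt_of_le_of_ne (hle i₀ hi₀) hne⟩
    rw [hentS] at hstrict
    linarith
  intro i
  by_cases hiS : i ∈ S
  · left
    by_contra hne
    exact absurd (heq i hiS) (ne_of_lt (myTangentStrict (hpos i hiS) hne))
  · right
    simpa [hS] using hiS

lemma myDotStar {n : ℕ} (u v : Fin n → ℂ) :
    u ⬝ᵥ star v = star (star u ⬝ᵥ v) := by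
  simp only [dotProduct, star_sum, star_mul', star_star, Pi.star_apply]

lemma myStarDot {n : ℕ} (u v : Fin n → ℂ) :
    star v ⬝ᵥ u = star (star u ⬝ᵥ v) := by
  simp only [dotProduct, star_sum, star_mul', star_star, Pi.star_apply]
  exact Finset.sum_congr rfl fun i _ => mul_comm _ _

end Aux

/-- If `u`, `v` are unit vectors in `ℂⁿ` (`n ≥ 2`) and the
density matrix `σ = (1/2)(u uᴴ + v vᴴ)` has von Neumann entropy `log 2`, then
`u` and `v` are orthogonal. -/
theorem orthogonal_of_equal_mixture_max_entropy {n : ℕ} (hn : 2 ≤ n)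
    (u v : Fin n → ℂ) (hu : star u ⬝ᵥ u = 1) (hv : star v ⬝ᵥ v = 1)
    (σ : Matrix (Fin n) (Fin n) ℂ)
    (hσ : σ = (1 / 2 : ℂ) • (vecMulVec u (star u) + vecMulVec v (star v)))
    (hS : vnEntropy σ = Real.log 2) :
    star u ⬝ᵥ v = 0 := by
  classical
  have hPSD : σ.PosSemidef := myPSD u v σ hσ
  have hH : σ.IsHermitian := hPSD.isHermitian
  have hent : ∑ i, Real.negMulLog (hH.eigenvalues i) = Real.log 2 := by
    rw [vnEntropy, dif_pos hH] at hS
    exact hS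
  have htr : σ.trace = 1 := by
    rw [hσ, trace_smul, trace_add, myTrace_vecMulVec, myTrace_vecMulVec,
      dotProduct_comm u (star u), dotProduct_comm v (star v), hu, hv]
    norm_num
  have hsum : ∑ i, hH.eigenvalues i = 1 := by
    have h1 : ((∑ i, hH.eigenvalues i : ℝ) : ℂ) = 1 := by
      rw [Complex.ofReal_sum, ← myTraceEig hH, htr]
    exact_mod_cast h1
  have hcard : Fintype.card {i // hH.eigenvalues i ≠ 0} ≤ 2 := by
    rw [← hH.rank_eq_card_non_zero_eigs]
    exact myRank u v σ hσ
  have heig : ∀ i, hH.eigenvalues i = 1/2 ∨ hH.eigenvalues i = 0 :=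
    myEigHalf _ (fun i => hPSD.eigenvalues_nonneg i) hsum hcard hent
  have hsq : σ * σ = (1/2 : ℂ) • σ := mySqHalf hH heig
  set c : ℂ := star u ⬝ᵥ v with hc
  set A := vecMulVec u (star u) with hA
  set B := vecMulVec v (star v) with hB
  have e1 : trace (A * A) = 1 := by
    rw [hA, myVecMulVec_mul, trace_smul, myTrace_vecMulVec, hu,
      dotProduct_comm u (star u), hu, one_smul]
  have e4 : trace (B * B) = 1 := by
    rw [hB, myVecMulVec_mul, trace_smul, myTrace_vecMulVec, hv,
      dotProduct_comm v (star v), hv, one_smul]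
  have e2 : trace (A * B) = c * star c := by
    rw [hA, hB, myVecMulVec_mul, trace_smul, myTrace_vecMulVec, smul_eq_mul,
      myDotStar u v, ← hc]
  have e3 : trace (B * A) = star c * c := by
    rw [hA, hB, myVecMulVec_mul, trace_smul, myTrace_vecMulVec, smul_eq_mul,
      myStarDot u v, ← hc, myDotStar v u, myStarDot u v, ← hc, star_star]
  have hlhs : (σ * σ).trace = (1/4 : ℂ) * (2 + 2 * (c * star c)) := by
    rw [hσ, Matrix.smul_mul, Matrix.mul_smul, smul_smul, add_mul, mul_add, mul_add,
      trace_smul, trace_add, trace_add, trace_add, e1, e2, e3, e4, smul_eq_mul,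
      mul_comm (star c) c]
    ring_nf
  have hrhs : ((1/2 : ℂ) • σ).trace = 1/2 := by
    rw [trace_smul, htr, smul_eq_mul, mul_one]
  have hfin : c * star c = 0 := by
    have := congrArg trace hsq
    rw [hlhs, hrhs] at this
    linear_combination 2 * this
  have : Complex.normSq c = 0 := by
    have h2 : (Complex.normSq c : ℂ) = 0 := by
      rw [← Complex.mul_conj, ← Complex.star_def, hfin]
    exact_mod_cast h2
  exact Complex.normSq_eq_zero.mp this
end
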